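/- arXiv:0804.1015 — 2 statements merged into one kernel-verified Lean document; each statement's English description precedes it below -/
import Mathlib

section
/- Let A be a Grothendieck category and B ⊆ A a localizing Serre subcategory closed under essential monomorphisms, with torsion functor τ : A → B right adjoint to the inclusion. Then for every injective object I of A, the subobject τ(I) is an injective object of A (hence a direct summand of I). -/
open CategoryTheory CategoryTheory.Limits

universe w v u

noncomputable section

set_option linter.unusedSectionVars false
set_option maxHeartbeats 1000000

namespace Stmt7Aux

variable {C : Type u} [Category.{v} C] [Abelian C]

/-- Serre subcategories are closed under quotients. -/
lemma P_of_epi (P : C → Prop)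
    (hSerre : ∀ S : ShortComplex C, S.ShortExact → (P S.X₂ ↔ P S.X₁ ∧ P S.X₃))
    {X Y : C} (e : X ⟶ Y) [Epi e] (hX : P X) : P Y := by
  let S : ShortComplex C := ShortComplex.mk (kernel.ι e) e (kernel.condition e)
  have hse : S.ShortExact := { exact := S.exact_of_f_is_kernel (kernelIsKernel e) }
  exact ((hSerre S hse).1 hX).2

variable (P : C → Prop) (τ : C ⥤ ObjectProperty.FullSubcategory P)
  (adj : ObjectProperty.ι P ⊣ τ)

/-- Any morphism from an object of `B` to `I` factors through the counit. -/
lemma factor_counit {Z : ObjectProperty.FullSubcategory P} {I : C}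
    (g : (ObjectProperty.ι P).obj Z ⟶ I) :
    (ObjectProperty.ι P).map (adj.homEquiv Z I g) ≫ adj.counit.app I = g := by
  have h := adj.homEquiv_counit (X := Z) (Y := I) (g := adj.homEquiv Z I g)
  rw [Equiv.symm_apply_apply] at h
  exact h.symm

/-- The counit of a localizing Serre subcategory is a monomorphism. -/
lemma counit_mono
    (hSerre : ∀ S : ShortComplex C, S.ShortExact → (P S.X₂ ↔ P S.X₁ ∧ P S.X₃))
    (I : C) : Mono (adj.counit.app I) := by
  set c := adj.counit.app I with hcdef
  have hPT : P ((ObjectProperty.ι P).obj (τ.obj I)) := (τ.obj I).property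
  have hPco : P (Abelian.coimage c) := P_of_epi P hSerre (Abelian.coimage.π c) hPT
  let Zb : ObjectProperty.FullSubcategory P := ⟨Abelian.coimage c, hPco⟩
  let m : (ObjectProperty.ι P).obj Zb ⟶ I := Abelian.factorThruCoimage c
  let mt : Zb ⟶ τ.obj I := adj.homEquiv Zb I m
  have hm : (ObjectProperty.ι P).map mt ≫ c = m := factor_counit P τ adj m
  -- the epi part, as a morphism in the full subcategory
  let eb : τ.obj I ⟶ Zb := ObjectProperty.homMk (Abelian.coimage.π c)
  have key : eb ≫ mt = 𝟙 (τ.obj I) := by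
    apply (adj.homEquiv (τ.obj I) I).symm.injective
    rw [Adjunction.homEquiv_counit, Adjunction.homEquiv_counit]
    rw [CategoryTheory.Functor.map_comp, CategoryTheory.Functor.map_id, Category.id_comp,
      Category.assoc]
    change Abelian.coimage.π c ≫ (ObjectProperty.ι P).map mt ≫ c = c
    rw [hm]
    exact Abelian.coimage.fac c
  have key' : Abelian.coimage.π c ≫ (ObjectProperty.ι P).map mt
      = 𝟙 ((ObjectProperty.ι P).obj (τ.obj I)) := by
    have := congrArg (fun f => (ObjectProperty.ι P).map f) key
    simpa [eb] using this
  haveI : IsSplitMono (Abelian.coimage.π c) :=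
    IsSplitMono.mk' ⟨(ObjectProperty.ι P).map mt, key'⟩
  haveI : IsIso (Abelian.coimage.π c) := isIso_of_mono_of_epi _
  have : c = Abelian.coimage.π c ≫ Abelian.factorThruCoimage c := (Abelian.coimage.fac c).symm
  rw [hcdef] at this ⊢
  rw [this]
  exact mono_comp _ _

/-- If there is `q : I ⟶ Z` with `Z ∈ B` such that `counit ≫ q` is mono, then
the counit at an injective `I` splits. -/
lemma counit_retraction {I : C} (hI : Injective I)
    (hc : Mono (adj.counit.app I)) {Z : C} (hZ : P Z) (q : I ⟶ Z)
    (hq : Mono (adj.counit.app I ≫ q)) :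
    ∃ r : I ⟶ (ObjectProperty.ι P).obj (τ.obj I), adj.counit.app I ≫ r = 𝟙 _ := by
  haveI := hI
  haveI : Injective ((𝟭 C).obj I) := hI
  haveI := hc
  haveI := hq
  let g : Z ⟶ I := Injective.factorThru (adj.counit.app I) (adj.counit.app I ≫ q)
  have hg : (adj.counit.app I ≫ q) ≫ g = adj.counit.app I :=
    Injective.comp_factorThru (adj.counit.app I) (adj.counit.app I ≫ q)
  let Zb : ObjectProperty.FullSubcategory P := ⟨Z, hZ⟩
  have hgt : (ObjectProperty.ι P).map (adj.homEquiv Zb I g) ≫ adj.counit.app I = g :=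
    factor_counit P τ adj (Z := Zb) g
  set gt := (ObjectProperty.ι P).map (adj.homEquiv Zb I g) with hgtdef
  refine ⟨q ≫ gt, ?_⟩
  have : (adj.counit.app I ≫ (q ≫ gt)) ≫ adj.counit.app I = 𝟙 _ ≫ adj.counit.app I := by
    rw [Category.id_comp, Category.assoc, Category.assoc, hgt, ← Category.assoc, hg]
  exact (cancel_mono (adj.counit.app I)).mp this

/-- An object admitting a retraction from an injective object is injective. -/
lemma injective_of_retraction {T I : C} (hI : Injective I) (cmap : T ⟶ I) (r : I ⟶ T)
    (hr : cmap ≫ r = 𝟙 T) : Injective T := by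
  haveI := hI
  constructor
  intro X Y g f hf
  exact ⟨Injective.factorThru (g ≫ cmap) f ≫ r, by
    rw [← Category.assoc, Injective.comp_factorThru, Category.assoc, hr, Category.comp_id]⟩

variable [HasColimits C] [HasFilteredColimits C] [AB5 C] [WellPowered.{v} C]

/-- AB5 key step: if `c ≫ cokernel.π (α j)` is mono for all `j` in a filtered diagram of
subobject-like maps `α j : F j ⟶ I`, then `c ≫ cokernel.π k` is mono for the induced map
`k` from the colimit. -/
lemma mono_cokernel_colimit {J : Type v} [SmallCategory J] [IsFiltered J]
    (F : J ⥤ C) {T I : C} (c : T ⟶ I)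
    (α : ∀ j, F.obj j ⟶ I) (hα : ∀ {j j'} (f : j ⟶ j'), F.map f ≫ α j' = α j)
    (hmono : ∀ j, Mono (c ≫ cokernel.π (α j)))
    (k : colimit F ⟶ I) (hk : ∀ j, colimit.ι F j ≫ k = α j) :
    Mono (c ≫ cokernel.π k) := by
  -- the functor of cokernels
  let X : J ⥤ C :=
  { obj := fun j => cokernel (α j)
    map := fun {a b} f => cokernel.desc (α a) (cokernel.π (α b))
      (by rw [← hα f, Category.assoc, cokernel.condition, comp_zero])
    map_id := by
      intro a
      rw [← cancel_epi (cokernel.π (α a))]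
      simp
    map_comp := by
      intro a b d f g
      rw [← cancel_epi (cokernel.π (α a))]
      simp }
  have hXmap : ∀ {a b : J} (f : a ⟶ b), cokernel.π (α a) ≫ X.map f = cokernel.π (α b) := by
    intro a b f
    simp [X]
  let β : (Functor.const J).obj T ⟶ X :=
  { app := fun j => c ≫ cokernel.π (α j)
    naturality := by
      intro a b f
      show 𝟙 T ≫ (c ≫ cokernel.π (α b)) = (c ≫ cokernel.π (α a)) ≫ X.map f
      rw [Category.id_comp, Category.assoc, hXmap f] }
  haveI : ∀ j, Mono (β.app j) := fun j => hmono j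
  haveI : Mono β := NatTrans.mono_of_mono_app β
  haveI hmcm : Mono (colimMap β) := inferInstanceAs (Mono (colim.map β))
  -- the cocone on `X` with point `cokernel k`
  have hw0 : ∀ j, α j ≫ cokernel.π k = 0 := fun j => by
    rw [← hk j, Category.assoc, cokernel.condition, comp_zero]
  let w : ∀ j, cokernel (α j) ⟶ cokernel k := fun j => cokernel.desc (α j) (cokernel.π k) (hw0 j)
  have hwπ : ∀ j, cokernel.π (α j) ≫ w j = cokernel.π k := fun j => cokernel.π_desc _ _ _
  let coc : Cocone X :=
  { pt := cokernel k
    ι :=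
    { app := w
      naturality := by
        intro a b f
        show X.map f ≫ w b = w a ≫ 𝟙 (cokernel k)
        rw [Category.comp_id, ← cancel_epi (cokernel.π (α a)), ← Category.assoc, hXmap f,
          hwπ b, hwπ a] } }
  -- this cocone is colimiting
  haveI : Nonempty J := IsFiltered.nonempty
  have j0 : J := Classical.arbitrary J
  have key : ∀ (s : Cocone X) (a b : J),
      cokernel.π (α a) ≫ s.ι.app a = cokernel.π (α b) ≫ s.ι.app b := by
    intro s a b
    have e1 : cokernel.π (α a) ≫ s.ι.app a
        = cokernel.π (α (IsFiltered.max a b)) ≫ s.ι.app (IsFiltered.max a b) := by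
      rw [← s.w (IsFiltered.leftToMax a b), ← Category.assoc, hXmap]
    have e2 : cokernel.π (α b) ≫ s.ι.app b
        = cokernel.π (α (IsFiltered.max a b)) ≫ s.ι.app (IsFiltered.max a b) := by
      rw [← s.w (IsFiltered.rightToMax a b), ← Category.assoc, hXmap]
    rw [e1, e2]
  have hk0 : ∀ s : Cocone X, k ≫ (cokernel.π (α j0) ≫ s.ι.app j0) = 0 := by
    intro s
    apply colimit.hom_ext
    intro j
    rw [comp_zero, ← Category.assoc, ← Category.assoc, hk j, Category.assoc,
      key s j0 j, ← Category.assoc, cokernel.condition, zero_comp]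
  let hcolim : IsColimit coc :=
  { desc := fun s => cokernel.desc k (cokernel.π (α j0) ≫ s.ι.app j0) (hk0 s)
    fac := by
      intro s j
      rw [← cancel_epi (cokernel.π (α j))]
      show cokernel.π (α j) ≫ w j ≫ _ = _
      rw [← Category.assoc, hwπ j, cokernel.π_desc, key s j0 j]
    uniq := by
      intro s m hm
      rw [← cancel_epi (cokernel.π k), cokernel.π_desc, ← hwπ j0, Category.assoc]
      have := hm j0
      show cokernel.π (α j0) ≫ w j0 ≫ m = _
      rw [this] }
  let ii : colimit X ≅ cokernel k := (colimit.isColimit X).coconePointUniqueUpToIso hcolim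
  have hii : ∀ j, colimit.ι X j ≫ ii.hom = w j := fun j =>
    (colimit.isColimit X).comp_coconePointUniqueUpToIso_hom hcolim j
  -- the canonical map `T ⟶ colimit (const T)` is an isomorphism
  let u := colimit.ι ((Functor.const J).obj T) j0
  have hconst : ∀ a b : J,
      colimit.ι ((Functor.const J).obj T) a = colimit.ι ((Functor.const J).obj T) b := by
    intro a b
    have h1 := colimit.w ((Functor.const J).obj T) (IsFiltered.leftToMax a b)
    have h2 := colimit.w ((Functor.const J).obj T) (IsFiltered.rightToMax a b)
    simp only [Functor.const_obj_map, Category.id_comp] at h1 h2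
    rw [← h1, ← h2]
  let vcoc : Cocone ((Functor.const J).obj T) :=
  { pt := T
    ι := { app := fun _ => 𝟙 T, naturality := by intros; simp } }
  let v : colimit ((Functor.const J).obj T) ⟶ T := colimit.desc _ vcoc
  have huv : u ≫ v = 𝟙 T := colimit.ι_desc vcoc j0
  have hvu : v ≫ u = 𝟙 _ := by
    apply colimit.hom_ext
    intro j
    rw [← Category.assoc, Category.comp_id]
    show (colimit.ι _ j ≫ colimit.desc _ vcoc) ≫ u = _
    rw [colimit.ι_desc]
    show 𝟙 T ≫ _ = _
    rw [Category.id_comp]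
    exact hconst j0 j
  haveI : IsIso u := ⟨v, huv, hvu⟩
  -- conclude
  have hfin : c ≫ cokernel.π k = u ≫ colimMap β ≫ ii.hom := by
    rw [← Category.assoc]
    show _ = (colimit.ι ((Functor.const J).obj T) j0 ≫ colimMap β) ≫ ii.hom
    rw [ι_colimMap, Category.assoc, hii j0]
    show _ = (c ≫ cokernel.π (α j0)) ≫ w j0
    rw [Category.assoc, hwπ j0]
  rw [hfin]
  haveI : Mono (colimMap β ≫ ii.hom) := mono_comp _ _
  exact mono_comp _ _

/-- There exists a subobject of `I` maximal among those `M` with `M ⊓ T = 0`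
(phrased as: `c ≫ cokernel.π M.arrow` is mono). -/
lemma exists_maximal {T I : C} (c : T ⟶ I) [Mono c] :
    ∃ M, Maximal (· ∈ {M : Subobject I | Mono (c ≫ cokernel.π M.arrow)}) M := by
  apply zorn_le₀
  intro s hs hchain
  rcases s.eq_empty_or_nonempty with rfl | hne
  · refine ⟨⊥, ?_, by simp⟩
    show Mono (c ≫ cokernel.π (⊥ : Subobject I).arrow)
    rw [Subobject.bot_arrow]
    exact mono_comp _ _
  · -- shrink the chain to a `v`-small filtered poset
    haveI : Small.{v} ↥s :=
      small_of_injective (f := fun x : ↥s => (x : Subobject I)) Subtype.val_injective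
    let J := Shrink.{v} ↥s
    let σ : J → Subobject I := fun j => ((equivShrink ↥s).symm j : Subobject I)
    have hσs : ∀ j, σ j ∈ s := fun j => ((equivShrink ↥s).symm j).2
    letI : Preorder J := Preorder.lift σ
    haveI : Nonempty J := ⟨equivShrink ↥s ⟨hne.some, hne.some_mem⟩⟩
    haveI : IsDirected J (· ≤ ·) := by
      constructor
      intro a b
      rcases eq_or_ne (σ a) (σ b) with h | h
      · exact ⟨b, (by show σ a ≤ σ b; exact le_of_eq h), le_refl _⟩
      · rcases hchain.total (hσs a) (hσs b) with h' | h'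
        · exact ⟨b, h', le_refl _⟩
        · exact ⟨a, le_refl _, h'⟩
    letI : SmallCategory J := inferInstance
    haveI : IsFiltered J := isFiltered_of_directed_le_nonempty J
    haveI : HasColimitsOfShape J C := inferInstance
    let F : J ⥤ C :=
    { obj := fun j => ((σ j : Subobject I) : C)
      map := fun {a b} f => Subobject.ofLE _ _ f.down.down
      map_id := fun a => Subobject.ofLE_refl _
      map_comp := fun f g => (Subobject.ofLE_comp_ofLE _ _ _ _ _).symm }
    let cc : Cocone F :=
    { pt := I
      ι :=
      { app := fun j => (σ j).arrow
        naturality := by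
          intro a b f
          show Subobject.ofLE _ _ _ ≫ (σ b).arrow = (σ a).arrow ≫ 𝟙 I
          rw [Subobject.ofLE_arrow, Category.comp_id] } }
    let k : colimit F ⟶ I := colimit.desc F cc
    have hk : ∀ j, colimit.ι F j ≫ k = (σ j).arrow := fun j => colimit.ι_desc cc j
    have hbig : Mono (c ≫ cokernel.π k) := by
      apply mono_cokernel_colimit F c (fun j => (σ j).arrow)
        (fun {a b} f => Subobject.ofLE_arrow _) (fun j => hs (hσs j)) k hk
    -- the upper bound is the image of `k`
    refine ⟨imageSubobject k, ?_, ?_⟩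
    · show Mono (c ≫ cokernel.π (imageSubobject k).arrow)
      have hm0 : (imageSubobject k).arrow ≫ cokernel.π k = 0 := by
        rw [← cancel_epi (factorThruImageSubobject k), comp_zero, ← Category.assoc,
          imageSubobject_arrow_comp, cokernel.condition]
      have hk0 : k ≫ cokernel.π (imageSubobject k).arrow = 0 :=
        calc k ≫ cokernel.π (imageSubobject k).arrow
            = factorThruImageSubobject k ≫
              ((imageSubobject k).arrow ≫ cokernel.π (imageSubobject k).arrow) := by
              rw [← Category.assoc, imageSubobject_arrow_comp]
          _ = 0 := by rw [cokernel.condition, comp_zero]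
      let d : cokernel k ⟶ cokernel (imageSubobject k).arrow :=
        cokernel.desc k (cokernel.π _) hk0
      let d' : cokernel (imageSubobject k).arrow ⟶ cokernel k :=
        cokernel.desc _ (cokernel.π k) hm0
      have hdd : d ≫ d' = 𝟙 _ := by
        rw [← cancel_epi (cokernel.π k)]
        show cokernel.π k ≫ d ≫ d' = cokernel.π k ≫ 𝟙 _
        rw [Category.comp_id, ← Category.assoc]
        show (cokernel.π k ≫ cokernel.desc k (cokernel.π _) hk0) ≫ d' = cokernel.π k
        rw [cokernel.π_desc]
        exact cokernel.π_desc _ _ _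
      haveI : IsSplitMono d := IsSplitMono.mk' ⟨d', hdd⟩
      have hfin : c ≫ cokernel.π (imageSubobject k).arrow = (c ≫ cokernel.π k) ≫ d := by
        rw [Category.assoc]
        show _ = c ≫ cokernel.π k ≫ cokernel.desc k (cokernel.π _) hk0
        rw [cokernel.π_desc]
      rw [hfin]
      haveI := hbig
      exact mono_comp _ _
    · intro M hM
      have hub : ∀ j, σ j ≤ imageSubobject k := by
        intro j
        apply Subobject.le_of_comm (colimit.ι F j ≫ factorThruImageSubobject k)
        rw [Category.assoc, imageSubobject_arrow_comp, hk j]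
      have hσM : σ (equivShrink ↥s ⟨M, hM⟩) = M := by
        show (((equivShrink ↥s).symm (equivShrink ↥s ⟨M, hM⟩)) : Subobject I) = M
        rw [Equiv.symm_apply_apply]
      rw [← hσM]
      exact hub _

/-- Given a maximal `M` with `M ⊓ T = 0`, the composite `T ⟶ I ⟶ I/M` is an essential
monomorphism. -/
lemma essential_of_maximal {T I : C} (c : T ⟶ I) [Mono c]
    (M : Subobject I)
    (hmax : Maximal (· ∈ {N : Subobject I | Mono (c ≫ cokernel.π N.arrow)}) M)
    {W : C} (g : cokernel M.arrow ⟶ W)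
    (hg : Mono ((c ≫ cokernel.π M.arrow) ≫ g)) : Mono g := by
  set q := cokernel.π M.arrow with hq
  -- the kernel of `q ≫ g` also meets `T` trivially, hence is `≤ M` by maximality
  have hMN : M ≤ kernelSubobject (q ≫ g) := by
    apply le_kernelSubobject
    rw [← Category.assoc, cokernel.condition, zero_comp]
  have hNmem : Mono (c ≫ cokernel.π (kernelSubobject (q ≫ g)).arrow) := by
    rw [← kernelSubobject_arrow]
    -- `Mono (c ≫ cokernel.π (iso.hom ≫ kernel.ι (q ≫ g)))`
    have h2 : Mono (c ≫ cokernel.π (kernel.ι (q ≫ g))) := by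
      have fac : (c ≫ cokernel.π (kernel.ι (q ≫ g))) ≫ Abelian.factorThruCoimage (q ≫ g)
          = (c ≫ q) ≫ g := by
        rw [Category.assoc, Abelian.coimage.fac, Category.assoc]
      haveI : Mono ((c ≫ cokernel.π (kernel.ι (q ≫ g))) ≫
          Abelian.factorThruCoimage (q ≫ g)) := by rw [fac]; exact hg
      exact mono_of_mono _ (Abelian.factorThruCoimage (q ≫ g))
    have h3 : c ≫ cokernel.π ((kernelSubobjectIso (q ≫ g)).hom ≫ kernel.ι (q ≫ g))
        = (c ≫ cokernel.π (kernel.ι (q ≫ g))) ≫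
          (cokernelEpiComp (kernelSubobjectIso (q ≫ g)).hom (kernel.ι (q ≫ g))).inv := by
      rw [Category.assoc, cokernelEpiComp_inv, cokernel.π_desc]
    rw [h3]
    haveI := h2
    exact mono_comp _ _
  have hNM : kernelSubobject (q ≫ g) ≤ M := hmax.2 hNmem hMN
  have hNq : kernel.ι (q ≫ g) ≫ q = 0 := by
    have harr : (kernelSubobject (q ≫ g)).arrow ≫ q = 0 := by
      rw [← Subobject.ofLE_arrow hNM, Category.assoc, cokernel.condition, comp_zero]
    rw [← kernelSubobject_arrow', Category.assoc, harr, comp_zero]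
  -- conclude by a pseudoelement chase
  apply Abelian.Pseudoelement.mono_of_zero_of_map_zero
  intro z hz
  obtain ⟨x, hx⟩ := Abelian.Pseudoelement.pseudo_surjective_of_epi q z
  have hqg : Abelian.Pseudoelement.pseudoApply (q ≫ g) x = 0 := by
    rw [Abelian.Pseudoelement.comp_apply, hx]
    exact hz
  let S2 : ShortComplex C := ShortComplex.mk (kernel.ι (q ≫ g)) (q ≫ g) (kernel.condition _)
  have hex : S2.Exact := S2.exact_of_f_is_kernel (kernelIsKernel _)
  obtain ⟨y, hy⟩ := Abelian.Pseudoelement.pseudo_exact_of_exact hex x hqg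
  calc z = Abelian.Pseudoelement.pseudoApply q x := hx.symm
    _ = Abelian.Pseudoelement.pseudoApply (kernel.ι (q ≫ g) ≫ q) y := by
        rw [Abelian.Pseudoelement.comp_apply, hy]
    _ = Abelian.Pseudoelement.pseudoApply 0 y := by rw [hNq]
    _ = 0 := Abelian.Pseudoelement.zero_apply _ _

end Stmt7Aux

/-- let `A` be a Grothendieck category and `B ⊆ A` a localizing Serre
subcategory closed under essential monomorphisms, with torsion functor `τ` right adjoint
to the inclusion. Then for every injective `I` of `A`, the subobject `τ(I)` is injective
in `A`; in particular, the counit `τ(I) → I` is a split monomorphism. -/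
theorem stmt7 {C : Type u} [Category.{v} C] [Abelian C]
    -- `A` is a Grothendieck category:
    [HasColimits C] [HasFilteredColimits C] (hAB5 : Nonempty (AB5 C))
    (G : C) (hG : IsSeparator G)
    -- `B` is a Serre subcategory:
    (P : C → Prop)
    (hIso : ∀ X Y : C, (X ≅ Y) → P X → P Y)
    (hSerre : ∀ S : ShortComplex C, S.ShortExact → (P S.X₂ ↔ P S.X₁ ∧ P S.X₃))
    -- `B` is localizing: the inclusion admits a right adjoint (torsion functor) `τ`:
    (τ : C ⥤ ObjectProperty.FullSubcategory P)
    (adj : ObjectProperty.ι P ⊣ τ)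
    -- `B` is closed under essential monomorphisms:
    (hess : ∀ (X Y : C) (f : X ⟶ Y), Mono f →
      (∀ (Z : C) (g : Y ⟶ Z), Mono (f ≫ g) → Mono g) → P X → P Y) :
    ∀ I : C, Injective I →
      Injective ((ObjectProperty.ι P).obj (τ.obj I)) ∧
        IsSplitMono (adj.counit.app I) := by
  intro I hI
  obtain ⟨ab5⟩ := hAB5
  haveI : AB5 C := ab5
  haveI : WellPowered.{v} C := wellPowered_of_isSeparator G hG
  haveI hc : Mono (adj.counit.app I) := Stmt7Aux.counit_mono P τ adj hSerre I
  obtain ⟨M, hmax⟩ := Stmt7Aux.exists_maximal (adj.counit.app I)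
  have hcq : Mono (adj.counit.app I ≫ cokernel.π M.arrow) := hmax.1
  have hess' : ∀ (W : C) (g : cokernel M.arrow ⟶ W),
      Mono ((adj.counit.app I ≫ cokernel.π M.arrow) ≫ g) → Mono g :=
    fun W g hg => Stmt7Aux.essential_of_maximal (adj.counit.app I) M hmax g hg
  have hPZ : P (cokernel M.arrow) :=
    hess _ _ (adj.counit.app I ≫ cokernel.π M.arrow) hcq hess' (τ.obj I).property
  obtain ⟨r, hr⟩ := Stmt7Aux.counit_retraction P τ adj hI hc hPZ (cokernel.π M.arrow) hcq
  exact ⟨Stmt7Aux.injective_of_retraction hI (adj.counit.app I) r hr,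
    IsSplitMono.mk' ⟨r, hr⟩⟩

end
end

section
/- Let A be an abelian category with enough injectives, T a generator, and I• = (Iⁿ, dⁿ) a complex of injective objects. If Hⁿ(I•) ≠ 0 for some n, then Hⁿ(Hom_A(T, I•)) ≠ 0. -/
open CategoryTheory CategoryTheory.Limits

universe v u

noncomputable section

/-- The Hom complex `Hom_A(T, I•)` of abelian groups associated to a cochain complex `I•`
and an object `T`. -/
def homCplx {C : Type u} [Category.{v} C] [Abelian C] (T : C) (I : CochainComplex C ℤ) :
    CochainComplex AddCommGrpCat.{v} ℤ :=
  ((preadditiveCoyoneda.obj (Opposite.op T)).mapHomologicalComplex _).obj I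

/-- if `T` is a generator and `I•` a complex of injectives with
`Hⁿ(I•) ≠ 0`, then `Hⁿ(Hom_A(T, I•)) ≠ 0`. -/
theorem stmt11 {C : Type u} [Category.{v} C] [Abelian C] [EnoughInjectives C]
    (T : C) (hT : IsSeparator T)
    (I : CochainComplex C ℤ) (hI : ∀ n : ℤ, Injective (I.X n))
    (n : ℤ) (h : ¬ IsZero (I.homology n)) :
    ¬ IsZero ((homCplx T I).homology n) := by
  intro hz
  apply h
  rw [← HomologicalComplex.exactAt_iff_isZero_homology] at hz ⊢
  rw [HomologicalComplex.exactAt_iff] at hz ⊢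
  rw [ShortComplex.ab_exact_iff] at hz
  rw [ShortComplex.exact_iff_epi_toCycles]
  -- Key: every `t : T ⟶ cycles` factors through `toCycles`.
  have key : ∀ t : T ⟶ (I.sc n).cycles, ∃ s : T ⟶ (I.sc n).X₁,
      s ≫ (I.sc n).toCycles = t := by
    intro t
    have h0 : ((homCplx T I).sc n).g (t ≫ (I.sc n).iCycles) = 0 := by
      show (t ≫ (I.sc n).iCycles) ≫ (I.sc n).g = 0
      rw [Category.assoc, (I.sc n).iCycles_g, comp_zero]
    obtain ⟨(s : T ⟶ (I.sc n).X₁), hs⟩ := hz _ h0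
    refine ⟨s, ?_⟩
    have hs' : s ≫ (I.sc n).f = t ≫ (I.sc n).iCycles := hs
    have : s ≫ (I.sc n).toCycles ≫ (I.sc n).iCycles = t ≫ (I.sc n).iCycles := by
      rw [(I.sc n).toCycles_i]
      exact hs'
    rw [← Category.assoc] at this
    exact (cancel_mono (I.sc n).iCycles).1 this
  constructor
  intro Z u v huv
  rw [← sub_eq_zero]
  apply hT.def
  intro t
  obtain ⟨s, hs⟩ := key t
  rw [← hs, Category.assoc, comp_zero, Preadditive.comp_sub, huv, sub_self, comp_zero]

end
end
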